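/- Dual Herbrand Theorem: Let L be a first-order language possessing at least one closed term (e.g., a constant symbol), and let ψ be a quantifier-free formula of L with free variables among x₁, …, xₙ. Then the purely universal sentence ∀x₁ … ∀xₙ ψ(x₁, …, xₙ) is unsatisfiable (has no model, i.e., is a classical contradiction) if and only if there exist m ≥ 1 and closed terms t₁ⁱ, …, tₙⁱ for i = 1, …, m such that the sentence ⋀_{i=1}^m ψ(t₁ⁱ, …, tₙⁱ) is unsatisfiable. -/

import Mathlib

universe u v w

open FirstOrder

namespace DualHerbrandAux

open FirstOrder.Language

variable {L : FirstOrder.Language.{u, v}}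


open FirstOrder.Language

variable {L : FirstOrder.Language.{u, v}}

/-- The function symbols occurring in a term. -/
def termFuns {α : Type*} : L.Term α → Set (Σ k, L.Functions k)
  | .var _ => ∅
  | .func f ts => insert ⟨_, f⟩ (⋃ i, termFuns (ts i))

theorem termFuns_countable {α : Type*} : ∀ t : L.Term α, (termFuns t).Countable
  | .var _ => Set.countable_empty
  | .func _ ts => ((Set.countable_iUnion fun i => termFuns_countable (ts i)).insert _)

/-- The function symbols occurring in a bounded formula. -/
def bfFuns {α : Type*} : ∀ {k}, L.BoundedFormula α k → Set (Σ k, L.Functions k)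
  | _, .falsum => ∅
  | _, .equal t₁ t₂ => termFuns t₁ ∪ termFuns t₂
  | _, .rel _ ts => ⋃ i, termFuns (ts i)
  | _, .imp f g => bfFuns f ∪ bfFuns g
  | _, .all f => bfFuns f

/-- The relation symbols occurring in a bounded formula. -/
def bfRels {α : Type*} : ∀ {k}, L.BoundedFormula α k → Set (Σ k, L.Relations k)
  | _, .falsum => ∅
  | _, .equal _ _ => ∅
  | _, .rel R _ => {⟨_, R⟩}
  | _, .imp f g => bfRels f ∪ bfRels g
  | _, .all f => bfRels f

theorem bfFuns_countable {α : Type*} : ∀ {k} (θ : L.BoundedFormula α k), (bfFuns θ).Countable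
  | _, .falsum => Set.countable_empty
  | _, .equal t₁ t₂ => (termFuns_countable t₁).union (termFuns_countable t₂)
  | _, .rel _ ts => Set.countable_iUnion fun i => termFuns_countable (ts i)
  | _, .imp f g => (bfFuns_countable f).union (bfFuns_countable g)
  | _, .all f => bfFuns_countable f

theorem bfRels_countable {α : Type*} : ∀ {k} (θ : L.BoundedFormula α k), (bfRels θ).Countable
  | _, .falsum => Set.countable_empty
  | _, .equal _ _ => Set.countable_empty
  | _, .rel _ _ => Set.countable_singleton _
  | _, .imp f g => (bfRels_countable f).union (bfRels_countable g)
  | _, .all f => bfRels_countable f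

variable (SF : Set (Σ k, L.Functions k)) (SR : Set (Σ k, L.Relations k))

/-- The sublanguage of `L` with function symbols in `SF` and relation symbols in `SR`. -/
def subLang : FirstOrder.Language.{u, v} where
  Functions k := { f : L.Functions k // ⟨k, f⟩ ∈ SF }
  Relations k := { R : L.Relations k // ⟨k, R⟩ ∈ SR }

/-- The inclusion of the sublanguage into `L`. -/
def subHom : subLang SF SR →ᴸ L where
  onFunction := fun _ f => f.1
  onRelation := fun _ R => R.1

theorem subHom_injective : (subHom SF SR).Injective :=
  ⟨fun h => Subtype.val_injective h, fun h => Subtype.val_injective h⟩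

theorem countable_subLang_funs (hSF : SF.Countable) :
    Countable (Σ k, (subLang SF SR).Functions k) := by
  haveI := hSF.to_subtype
  apply Function.Injective.countable
    (f := fun x : Σ k, (subLang SF SR).Functions k => (⟨⟨x.1, x.2.1⟩, x.2.2⟩ : SF))
  rintro ⟨k, f, hf⟩ ⟨l, g, hg⟩ h
  have h' : (⟨k, f⟩ : Σ k, L.Functions k) = ⟨l, g⟩ := congrArg Subtype.val h
  obtain ⟨rfl, h2⟩ := Sigma.mk.inj_iff.mp h'
  cases eq_of_heq h2
  rfl

theorem lift_term {γ : Type*} :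
    ∀ t : L.Term γ, termFuns t ⊆ SF →
      ∃ t' : (subLang SF SR).Term γ, (subHom SF SR).onTerm t' = t := by
  intro t
  induction t with
  | var a => exact fun _ => ⟨.var a, rfl⟩
  | @func l f ts ih =>
    intro h
    simp only [termFuns] at h
    have hf : (⟨l, f⟩ : Σ k, L.Functions k) ∈ SF := h (Set.mem_insert _ _)
    choose u hu using fun i => ih i (fun x hx =>
      h (Set.mem_insert_iff.mpr (Or.inr (Set.mem_iUnion.mpr ⟨i, hx⟩))))
    refine ⟨.func ⟨f, hf⟩ u, ?_⟩
    simp only [LHom.onTerm]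
    exact congrArg _ (funext hu)

theorem imp_isQF {α : Type*} {k} {φ₁ φ₂ : L.BoundedFormula α k}
    (h : (φ₁.imp φ₂).IsQF) : φ₁.IsQF ∧ φ₂.IsQF := by
  cases h with
  | of_isAtomic h => cases h
  | imp h1 h2 => exact ⟨h1, h2⟩

theorem all_not_isQF {α : Type*} {k} {φ : L.BoundedFormula α (k + 1)}
    (h : φ.all.IsQF) : False := by
  cases h with
  | of_isAtomic h => cases h

theorem lift_bf {β : Type*} :
    ∀ {k} (θ : L.BoundedFormula β k), bfFuns θ ⊆ SF → bfRels θ ⊆ SR →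
      ∃ θ' : (subLang SF SR).BoundedFormula β k,
        (subHom SF SR).onBoundedFormula θ' = θ ∧ (θ.IsQF → θ'.IsQF) := by
  intro k θ
  induction θ with
  | falsum => exact fun _ _ => ⟨.falsum, rfl, fun _ => BoundedFormula.isQF_bot⟩
  | equal t₁ t₂ =>
    intro hF _
    simp only [bfFuns] at hF
    obtain ⟨t₁', h₁⟩ := lift_term SF SR t₁ (Set.subset_union_left.trans hF)
    obtain ⟨t₂', h₂⟩ := lift_term SF SR t₂ (Set.subset_union_right.trans hF)
    exact ⟨.equal t₁' t₂', by simp only [LHom.onBoundedFormula, h₁, h₂]; rfl,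
      fun _ => (BoundedFormula.IsAtomic.equal _ _).isQF⟩
  | @rel k l R ts =>
    intro hF hR
    simp only [bfFuns] at hF
    simp only [bfRels] at hR
    have hRmem : (⟨l, R⟩ : Σ k, L.Relations k) ∈ SR := hR rfl
    choose u hu using fun i => lift_term SF SR (ts i)
      (fun x hx => hF (Set.mem_iUnion.mpr ⟨i, hx⟩))
    refine ⟨.rel ⟨R, hRmem⟩ u, ?_, fun _ => (BoundedFormula.IsAtomic.rel _ _).isQF⟩
    simp only [LHom.onBoundedFormula]
    show BoundedFormula.rel R _ = _
    exact congrArg _ (funext fun i => hu i)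
  | imp f g ihf ihg =>
    intro hF hR
    simp only [bfFuns] at hF
    simp only [bfRels] at hR
    obtain ⟨f', hf', hfq⟩ := ihf (Set.subset_union_left.trans hF) (Set.subset_union_left.trans hR)
    obtain ⟨g', hg', hgq⟩ := ihg (Set.subset_union_right.trans hF) (Set.subset_union_right.trans hR)
    exact ⟨f'.imp g', by simp only [LHom.onBoundedFormula, hf', hg'],
      fun h => (hfq (imp_isQF h).1).imp (hgq (imp_isQF h).2)⟩
  | all f ihf =>
    intro hF hR
    obtain ⟨f', hf', _⟩ := ihf hF hR
    exact ⟨f'.all, by simp only [LHom.onBoundedFormula, hf'],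
      fun h => absurd h (fun h => all_not_isQF h)⟩


end DualHerbrandAux

namespace DualHerbrandAux


open FirstOrder.Language

variable {L : FirstOrder.Language.{u, v}} {n : ℕ}

theorem realize_alls_iff (ψ : L.Formula (Fin n)) (M : Type*) [L.Structure M] :
    (Language.Sentence.Realize M
      (Language.BoundedFormula.alls
        (Language.BoundedFormula.relabel (Sum.inr : Fin n → Empty ⊕ Fin n) ψ))) ↔
    ∀ v : Fin n → M, ψ.Realize v := by
  rw [Sentence.Realize, BoundedFormula.realize_alls]
  exact forall_congr' fun v => Formula.realize_relabel_sumInr ψ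

theorem realize_subst_iff (ψ : L.Formula (Fin n)) (u : Fin n → L.Term Empty)
    (M : Type*) [L.Structure M] :
    Language.Sentence.Realize M (ψ.subst u) ↔
      ψ.Realize (fun j => (u j).realize (default : Empty → M)) := by
  rw [Sentence.Realize, Formula.Realize, Formula.Realize, BoundedFormula.realize_subst]

theorem realize_conj_iff (ψ : L.Formula (Fin n)) {m : ℕ} (t : Fin m → Fin n → L.Term Empty)
    (M : Type*) [L.Structure M] :
    (Language.Sentence.Realize M
      (Language.BoundedFormula.iInf (fun i : Fin m => ψ.subst (t i)))) ↔
    ∀ i : Fin m, ψ.Realize (fun j => (t i j).realize (default : Empty → M)) := by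
  rw [Sentence.Realize, Formula.Realize, BoundedFormula.realize_iInf]
  exact forall_congr' fun i => by
    rw [BoundedFormula.realize_subst]
    rfl

end DualHerbrandAux

open DualHerbrandAux FirstOrder.Language


/-- **Dual Herbrand Theorem.** In a language with at least one closed term, a purely
universal sentence `∀ x₁ … ∀ xₙ ψ(x₁, …, xₙ)` (with `ψ` quantifier-free) is a classical
contradiction (has no nonempty model) iff there exist `m ≥ 1` and closed terms
`tⱼⁱ` (`i = 1, …, m`) such that the conjunction `⋀ᵢ ψ(t₁ⁱ, …, tₙⁱ)` is a contradiction. -/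
theorem dual_herbrand {L : FirstOrder.Language.{u, v}} (t₀ : L.Term Empty) (n : ℕ)
    (ψ : L.Formula (Fin n)) (hqf : ψ.IsQF) :
    (¬ ∃ (M : Type w) (_ : L.Structure M) (_ : Nonempty M),
        Language.Sentence.Realize M
          (Language.BoundedFormula.alls
            (Language.BoundedFormula.relabel (Sum.inr : Fin n → Empty ⊕ Fin n) ψ))) ↔
    (∃ m : ℕ, 0 < m ∧ ∃ t : Fin m → Fin n → L.Term Empty,
      ¬ ∃ (M : Type w) (_ : L.Structure M) (_ : Nonempty M),
        Language.Sentence.Realize M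
          (Language.BoundedFormula.iInf (fun i : Fin m => ψ.subst (t i)))) := by

  classical
  constructor
  · -- hard direction
    intro hΦ
    by_contra hcon
    push_neg at hcon
    set T : L.Theory := Set.range (fun t : Fin n → L.Term Empty => ψ.subst t) with hTdef
    -- T is finitely satisfiable
    have hfin : T.IsFinitelySatisfiable := by
      intro T0 hT0
      haveI : Inhabited (L.Term Empty) := ⟨t₀⟩
      choose! g hg using fun (s : L.Sentence) (hs : s ∈ (T0 : L.Theory)) => (hT0 hs : s ∈ T)
      obtain ⟨M, iM, hne, hM⟩ := hcon (T0.card + 1) (Nat.succ_pos _)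
        (fun i => if h : (i : ℕ) < T0.card then g (T0.equivFin.symm ⟨i, h⟩) else fun _ => t₀)
      haveI := hne
      rw [@realize_conj_iff L n ψ _ _ M iM] at hM
      haveI : M ⊨ (T0 : L.Theory) := by
        refine ⟨fun s hs => ?_⟩
        have hlt : ((T0.equivFin ⟨s, Finset.mem_coe.mp hs⟩ : Fin T0.card) : ℕ) < T0.card :=
          (T0.equivFin ⟨s, Finset.mem_coe.mp hs⟩).2
        have h1 := hM ⟨_, Nat.lt_succ_of_lt hlt⟩
        rw [dif_pos hlt] at h1 -- may need tweaking
        simp only [Fin.eta, Equiv.symm_apply_apply] at h1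
        rw [← hg s hs, realize_subst_iff]
        exact h1
      exact Theory.Model.isSatisfiable M
    have hsat : T.IsSatisfiable := Theory.isSatisfiable_iff_isFinitelySatisfiable.mpr hfin
    obtain ⟨N⟩ := hsat
    -- countable sublanguage containing the symbols of ψ and t₀
    set SF := bfFuns (ψ : L.BoundedFormula (Fin n) 0) ∪ termFuns t₀ with hSF
    set SR := bfRels (ψ : L.BoundedFormula (Fin n) 0) with hSR
    obtain ⟨ψ₁, hψ₁, hψq⟩ := lift_bf SF SR ψ Set.subset_union_left (subset_refl _)
    obtain ⟨t₁, ht₁⟩ := lift_term SF SR t₀ Set.subset_union_right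
    have hψ₁qf := hψq hqf
    haveI : Countable (Σ k, (subLang SF SR).Functions k) :=
      countable_subLang_funs SF SR ((bfFuns_countable _).union (termFuns_countable _))
    letI : (subLang SF SR).Structure N := (subHom SF SR).reduct N
    set D := Substructure.closure (subLang SF SR) (∅ : Set N) with hDdef
    haveI cD : Countable D := Set.countable_empty.substructure_closure (subLang SF SR)
    have hmemD : ∀ u : (subLang SF SR).Term Empty,
        Term.realize (default : Empty → N) u ∈ D := by
      intro u
      rw [hDdef, Substructure.mem_closure_iff_exists_term]
      refine ⟨u.relabel (fun e : Empty => e.elim), ?_⟩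
      rw [Term.realize_relabel]
      exact congrArg (fun z => Term.realize z u) (Subsingleton.elim _ _)
    haveI : Nonempty D := ⟨⟨_, hmemD t₁⟩⟩
    -- N realizes ψ₁ at all tuples of closed-term values
    have hNall : ∀ u : Fin n → (subLang SF SR).Term Empty,
        Formula.Realize (M := N) ψ₁ (fun i => Term.realize (default : Empty → N) (u i)) := by
      intro u
      have h1 : Language.Sentence.Realize N (ψ.subst (fun i => (subHom SF SR).onTerm (u i))) :=
        Theory.realize_sentence_of_mem T ⟨fun i => (subHom SF SR).onTerm (u i), rfl⟩
      rw [realize_subst_iff] at h1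
      rw [← hψ₁] at h1
      rw [show ((subHom SF SR).onBoundedFormula ψ₁ : L.Formula (Fin n)) =
        (subHom SF SR).onFormula ψ₁ from rfl] at h1
      rw [LHom.realize_onFormula] at h1
      have he : (fun i => Term.realize (default : Empty → N) (u i)) =
          (fun i => Term.realize (default : Empty → N) ((subHom SF SR).onTerm (u i))) := by
        funext i
        exact (LHom.realize_onTerm (subHom SF SR) (u i) (default : Empty → N)).symm
      rw [he]
      exact h1
    -- D realizes ψ₁ at all tuples (via quantifier-freeness and the embedding)
    have hD : ∀ v : Fin n → D, Formula.Realize ψ₁ v := by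
      intro v
      choose tv htv using fun i => Substructure.mem_closure_iff_exists_term.mp (v i).2
      have h2 := hNall (fun i => (tv i).relabel
        (fun x : ((∅ : Set N) : Set N) => absurd x.2 (Set.notMem_empty _)))
      have he : (fun i => Term.realize (default : Empty → N)
            ((tv i).relabel (fun x : ((∅ : Set N) : Set N) =>
              absurd x.2 (Set.notMem_empty _)))) = fun i => ((v i : N)) := by
        funext i
        rw [Term.realize_relabel]
        rw [show ((default : Empty → N) ∘ fun x : ((∅ : Set N) : Set N) =>
          absurd x.2 (Set.notMem_empty _)) = (fun x : ((∅ : Set N) : Set N) => (x : N)) from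
          Subsingleton.elim _ _]
        exact htv i
      rw [he] at h2
      have h3 := (hψ₁qf.realize_embedding D.subtype (v := v) (xs := default)).symm.mpr ?_
      · exact h3
      · rw [show (D.subtype ∘ v) = fun i => ((v i : N)) from rfl]
        rw [show (D.subtype ∘ (default : Fin 0 → D)) = (default : Fin 0 → N) from
          Subsingleton.elim _ _]
        exact h2
    -- expand D to an L-structure
    haveI : Inhabited D := Classical.inhabited_of_nonempty'
    letI : L.Structure D := (subHom SF SR).defaultExpansion D
    haveI : (subHom SF SR).IsExpansionOn D :=
      (subHom_injective SF SR).isExpansionOn_default D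
    have hDψ : ∀ v : Fin n → D, ψ.Realize v := by
      intro v
      rw [← hψ₁]
      rw [show ((subHom SF SR).onBoundedFormula ψ₁ : L.Formula (Fin n)) =
        (subHom SF SR).onFormula ψ₁ from rfl]
      rw [LHom.realize_onFormula]
      exact hD v
    -- shrink to universe w
    haveI : Small.{w} D := Countable.toSmall _
    letI : L.Structure (Shrink.{w} D) := (equivShrink D).inducedStructure
    apply hΦ
    refine ⟨Shrink.{w} D, inferInstance, ⟨equivShrink D (Classical.arbitrary D)⟩, ?_⟩
    rw [← StrongHomClass.realize_sentence (Equiv.inducedStructureEquiv (equivShrink D))]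
    rw [realize_alls_iff]
    exact hDψ
  · -- easy direction
    rintro ⟨m, hm, t, hconj⟩ ⟨M, iM, hne, hΦ⟩
    exact hconj ⟨M, iM, hne, (@realize_conj_iff L n ψ m t M iM).mpr
      (fun i => (@realize_alls_iff L n ψ M iM).mp hΦ _)⟩
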